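/- Let X be a complete p-uniformly convex metric space with parameter k > 0, let (x_n) be a bounded sequence in X, and define φ : X → ℝ by φ(x) = limsup_{n → ∞} d(x, x_n). Let K be a nonempty closed convex subset of X. Then there exists a unique point u ∈ K such that φ(u) = inf_{x ∈ K} φ(x). -/

import Mathlib

open Filter Topology Real

/-- In a complete `p`-uniformly convex space, the asymptotic-radius function
`φ x = limsup_n dist x (x_n)` of a bounded sequence attains its infimum over a
nonempty closed convex set `K` at a unique point of `K`. -/
theorem asymptotic_center_exists_unique
    {X : Type*} [MetricSpace X] [CompleteSpace X]
    (p k : ℝ) (hp : 1 ≤ p) (hk : 0 < k)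
    (geo : ∀ x y : X, ∃ m : X, dist x m = dist x y / 2 ∧ dist m y = dist x y / 2)
    (puc : ∀ x y z m : X,
      dist x m = dist x y / 2 → dist m y = dist x y / 2 →
      dist z m ^ p ≤ (1 / 2) * dist z x ^ p + (1 / 2) * dist z y ^ p
        - (k / 8) * dist x y ^ p)
    (xn : ℕ → X) (hxn : Bornology.IsBounded (Set.range xn))
    (K : Set X) (hK : K.Nonempty) (hKc : IsClosed K)
    (hKconv : ∀ x ∈ K, ∀ y ∈ K, ∀ m : X,
      dist x m = dist x y / 2 → dist m y = dist x y / 2 → m ∈ K) :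
    ∃! u : X, u ∈ K ∧
      Filter.limsup (fun n => dist u (xn n)) Filter.atTop
        = ⨅ x : K, Filter.limsup (fun n => dist (x : X) (xn n)) Filter.atTop := by
  classical
  have hp0 : (0:ℝ) < p := lt_of_lt_of_le one_pos hp
  set φ : X → ℝ := fun x => Filter.limsup (fun n => dist x (xn n)) Filter.atTop with hφ
  -- boundedness
  obtain ⟨C, hC⟩ := hxn.subset_closedBall (xn 0)
  have hCmem : ∀ n, dist (xn n) (xn 0) ≤ C := fun n => hC ⟨n, rfl⟩
  have hbdd : ∀ x : X, Filter.IsBoundedUnder (· ≤ ·) Filter.atTop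
      (fun n => dist x (xn n)) := by
    intro x
    refine ⟨dist x (xn 0) + C, Filter.eventually_map.2 (Filter.Eventually.of_forall ?_)⟩
    intro n
    calc dist x (xn n) ≤ dist x (xn 0) + dist (xn 0) (xn n) := dist_triangle _ _ _
      _ ≤ dist x (xn 0) + C := by rw [dist_comm (xn 0)]; linarith [hCmem n]
  have hcob : ∀ x : X, Filter.IsCoboundedUnder (· ≤ ·) Filter.atTop
      (fun n => dist x (xn n)) :=
    fun x => Filter.isCoboundedUnder_le_of_le _ (fun n => dist_nonneg)
  have hφ0 : ∀ x : X, 0 ≤ φ x := fun x =>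
    Filter.le_limsup_of_frequently_le
      (Filter.Frequently.of_forall fun n => dist_nonneg) (hbdd x)
  -- Lipschitz-type estimate
  have hLip : ∀ x y : X, φ x ≤ φ y + dist x y := by
    intro x y
    refine le_of_forall_pos_le_add ?_
    intro ε hε
    have h1 : ∀ᶠ n in Filter.atTop, dist y (xn n) < φ y + ε :=
      Filter.eventually_lt_of_limsup_lt (by linarith [hφ0 y]) (hbdd y)
    have : ∀ᶠ n in Filter.atTop, dist x (xn n) ≤ φ y + dist x y + ε := by
      filter_upwards [h1] with n hn
      calc dist x (xn n) ≤ dist x y + dist y (xn n) := dist_triangle _ _ _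
        _ ≤ φ y + dist x y + ε := by linarith
    exact Filter.limsup_le_of_le (hcob x) this
  -- the key convexity estimate for φ ^ p
  have hconv : ∀ x y m : X, dist x m = dist x y / 2 → dist m y = dist x y / 2 →
      φ m ^ p ≤ (1/2) * φ x ^ p + (1/2) * φ y ^ p - (k/8) * dist x y ^ p := by
    intro x y m h1 h2
    set R : ℝ → ℝ := fun ε =>
      (1/2) * (φ x + ε) ^ p + (1/2) * (φ y + ε) ^ p - (k/8) * dist x y ^ p with hR
    have key : ∀ ε > 0, φ m ^ p ≤ R ε := by
      intro ε hε
      have hx : ∀ᶠ n in Filter.atTop, dist x (xn n) < φ x + ε :=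
        Filter.eventually_lt_of_limsup_lt (by linarith [hφ0 x]) (hbdd x)
      have hy : ∀ᶠ n in Filter.atTop, dist y (xn n) < φ y + ε :=
        Filter.eventually_lt_of_limsup_lt (by linarith [hφ0 y]) (hbdd y)
      have hev : ∀ᶠ n in Filter.atTop, dist m (xn n) ^ p ≤ R ε := by
        filter_upwards [hx, hy] with n hnx hny
        have := puc x y (xn n) m h1 h2
        have hx' : dist (xn n) x ^ p ≤ (φ x + ε) ^ p := by
          rw [dist_comm]
          exact Real.rpow_le_rpow dist_nonneg hnx.le hp0.le
        have hy' : dist (xn n) y ^ p ≤ (φ y + ε) ^ p := by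
          rw [dist_comm]
          exact Real.rpow_le_rpow dist_nonneg hny.le hp0.le
        rw [dist_comm]
        calc dist (xn n) m ^ p
            ≤ (1/2) * dist (xn n) x ^ p + (1/2) * dist (xn n) y ^ p
              - (k/8) * dist x y ^ p := this
          _ ≤ R ε := by rw [hR]; dsimp only; nlinarith
      have hR0 : 0 ≤ R ε := by
        obtain ⟨n, hn⟩ := hev.exists
        exact le_trans (Real.rpow_nonneg dist_nonneg p) hn
      have hφm : φ m ≤ R ε ^ p⁻¹ := by
        refine Filter.limsup_le_of_le (hcob m) ?_
        filter_upwards [hev] with n hn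
        calc dist m (xn n) = (dist m (xn n) ^ p) ^ p⁻¹ :=
              (Real.rpow_rpow_inv dist_nonneg hp0.ne').symm
          _ ≤ R ε ^ p⁻¹ := Real.rpow_le_rpow (Real.rpow_nonneg dist_nonneg p) hn
              (by positivity)
      calc φ m ^ p ≤ (R ε ^ p⁻¹) ^ p := Real.rpow_le_rpow (hφ0 m) hφm hp0.le
        _ = R ε := Real.rpow_inv_rpow hR0 hp0.ne'
    -- let ε → 0⁺
    have hcont : Filter.Tendsto R (𝓝[>] 0) (𝓝 (R 0)) := by
      have : ContinuousAt R 0 := by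
        apply ContinuousAt.sub ?_ continuousAt_const
        apply ContinuousAt.add
        · exact (Real.continuousAt_rpow_const _ _ (Or.inr hp0.le)).comp
            ((continuousAt_const.add continuousAt_id)) |>.const_mul _
        · exact (Real.continuousAt_rpow_const _ _ (Or.inr hp0.le)).comp
            ((continuousAt_const.add continuousAt_id)) |>.const_mul _
      exact this.continuousWithinAt.tendsto
    have := ge_of_tendsto hcont
      (eventually_nhdsWithin_of_forall (fun ε hε => key ε hε))
    simpa [hR, add_zero] using this
  -- setting up the infimum
  haveI : Nonempty K := hK.to_subtype
  set I : ℝ := ⨅ x : K, φ x with hI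
  have hbdd_below : BddBelow (Set.range fun x : K => φ x) :=
    ⟨0, by rintro _ ⟨x, rfl⟩; exact hφ0 x⟩
  have hI_le : ∀ x ∈ K, I ≤ φ x := fun x hx => ciInf_le hbdd_below ⟨x, hx⟩
  have hI0 : 0 ≤ I := le_ciInf fun x => hφ0 x
  -- minimizing sequence
  have hmin : ∀ j : ℕ, ∃ x, x ∈ K ∧ φ x < I + 1/(j+1) := by
    intro j
    have hlt' : (⨅ x : K, φ x) < I + 1/(j+1) := by
      have : (0:ℝ) < 1/(j+1) := by positivity
      rw [← hI]; linarith
    obtain ⟨⟨x, hx⟩, hlt⟩ := exists_lt_of_ciInf_lt hlt'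
    exact ⟨x, hx, hlt⟩
  choose u hu hud using hmin
  -- Cauchy estimate
  have a_def : ∀ j : ℕ, φ (u j) ^ p - I ^ p ≤ (I + 1/(j+1)) ^ p - I ^ p := by
    intro j
    have := Real.rpow_le_rpow (hφ0 (u j)) (hud j).le hp0.le
    linarith
  set b : ℕ → ℝ := fun N => ((8/k) * ((I + 1/(N+1)) ^ p - I ^ p)) ^ p⁻¹ with hb
  have haN_nonneg : ∀ N : ℕ, 0 ≤ (I + 1/(N+1:ℝ)) ^ p - I ^ p := by
    intro N
    have : I ≤ I + 1/(N+1:ℝ) := by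
      have : (0:ℝ) < 1/(N+1:ℝ) := by positivity
      linarith
    have := Real.rpow_le_rpow hI0 this hp0.le
    linarith
  have hdist_bound : ∀ i j N : ℕ, N ≤ i → N ≤ j → dist (u i) (u j) ≤ b N := by
    intro i j N hNi hNj
    obtain ⟨m, hm1, hm2⟩ := geo (u i) (u j)
    have hmK : m ∈ K := hKconv _ (hu i) _ (hu j) m hm1 hm2
    have h1 : I ^ p ≤ φ m ^ p := Real.rpow_le_rpow hI0 (hI_le m hmK) hp0.le
    have h2 := hconv (u i) (u j) m hm1 hm2
    have hmono : ∀ l : ℕ, N ≤ l → (I + 1/(l+1:ℝ)) ^ p ≤ (I + 1/(N+1:ℝ)) ^ p := by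
      intro l hl
      apply Real.rpow_le_rpow (by positivity) ?_ hp0.le
      have : (1:ℝ)/(l+1) ≤ 1/(N+1) := by
        apply one_div_le_one_div_of_le (by positivity)
        exact_mod_cast by omega
      linarith
    have hdij : (k/8) * dist (u i) (u j) ^ p ≤ (I + 1/(N+1:ℝ)) ^ p - I ^ p := by
      have hai := a_def i
      have haj := a_def j
      have hmi := hmono i hNi
      have hmj := hmono j hNj
      nlinarith
    have hdp : dist (u i) (u j) ^ p ≤ (8/k) * ((I + 1/(N+1:ℝ)) ^ p - I ^ p) := by
      rw [← mul_le_mul_iff_right₀ hk]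
      have heq : k * ((8/k) * ((I + 1/(N+1:ℝ)) ^ p - I ^ p))
          = 8 * ((I + 1/(N+1:ℝ)) ^ p - I ^ p) := by field_simp
      rw [heq]; nlinarith [hdij]
    calc dist (u i) (u j) = (dist (u i) (u j) ^ p) ^ p⁻¹ :=
          (Real.rpow_rpow_inv dist_nonneg hp0.ne').symm
      _ ≤ b N := Real.rpow_le_rpow (Real.rpow_nonneg dist_nonneg p) hdp (by positivity)
  have hb0 : Filter.Tendsto b Filter.atTop (𝓝 0) := by
    have h1 : Filter.Tendsto (fun N : ℕ => I + 1/(N+1:ℝ)) Filter.atTop (𝓝 I) := by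
      have := tendsto_one_div_add_atTop_nhds_zero_nat (𝕜 := ℝ)
      simpa using (tendsto_const_nhds.add this)
    have h2 : Filter.Tendsto (fun N : ℕ => (8/k) * ((I + 1/(N+1:ℝ)) ^ p - I ^ p))
        Filter.atTop (𝓝 0) := by
      have h3 : Filter.Tendsto (fun N : ℕ => (I + 1/(N+1:ℝ)) ^ p) Filter.atTop
          (𝓝 (I ^ p)) :=
        ((Real.continuousAt_rpow_const I p (Or.inr hp0.le)).tendsto).comp h1
      have h5 : Filter.Tendsto (fun N : ℕ => (I + 1/(N+1:ℝ)) ^ p - I ^ p)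
          Filter.atTop (𝓝 0) := by
        simpa using h3.sub (tendsto_const_nhds (x := I ^ p))
      simpa using h5.const_mul (8/k)
    have h4 : ContinuousAt (fun t : ℝ => t ^ p⁻¹) 0 :=
      Real.continuousAt_rpow_const 0 p⁻¹ (Or.inr (by positivity))
    have := (h4.tendsto).comp h2
    simpa [hb, Real.zero_rpow (by positivity : p⁻¹ ≠ 0), Function.comp_def] using this
  have hcauchy : CauchySeq u := cauchySeq_of_le_tendsto_0 b
    (fun i j N hi hj => hdist_bound i j N hi hj) hb0
  obtain ⟨v, hv⟩ := cauchySeq_tendsto_of_complete hcauchy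
  have hvK : v ∈ K := hKc.mem_of_tendsto hv (Filter.Eventually.of_forall hu)
  -- φ (u j) → I
  have hφu : Filter.Tendsto (fun j => φ (u j)) Filter.atTop (𝓝 I) := by
    have hub : ∀ j, φ (u j) ≤ I + 1/(j+1:ℝ) := fun j => (hud j).le
    have h1 : Filter.Tendsto (fun j : ℕ => I + 1/(j+1:ℝ)) Filter.atTop (𝓝 I) := by
      have := tendsto_one_div_add_atTop_nhds_zero_nat (𝕜 := ℝ)
      simpa using (tendsto_const_nhds.add this)
    exact tendsto_of_tendsto_of_tendsto_of_le_of_le tendsto_const_nhds h1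
      (fun j => hI_le _ (hu j)) hub
  -- φ (u j) → φ v
  have hφv : Filter.Tendsto (fun j => φ (u j)) Filter.atTop (𝓝 (φ v)) := by
    have hd : Filter.Tendsto (fun j => dist (u j) v) Filter.atTop (𝓝 0) :=
      tendsto_iff_dist_tendsto_zero.mp hv
    have hlow : ∀ j, φ v - dist (u j) v ≤ φ (u j) := by
      intro j
      have := hLip v (u j)
      rw [dist_comm] at this
      linarith
    have hhigh : ∀ j, φ (u j) ≤ φ v + dist (u j) v := fun j => hLip (u j) v
    have h1 : Filter.Tendsto (fun j => φ v - dist (u j) v) Filter.atTop (𝓝 (φ v)) := by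
      simpa using (tendsto_const_nhds.sub hd)
    have h2 : Filter.Tendsto (fun j => φ v + dist (u j) v) Filter.atTop (𝓝 (φ v)) := by
      simpa using (tendsto_const_nhds.add hd)
    exact tendsto_of_tendsto_of_tendsto_of_le_of_le h1 h2 hlow hhigh
  have hφvI : φ v = I := tendsto_nhds_unique hφv hφu
  refine ⟨v, ⟨hvK, hφvI⟩, ?_⟩
  rintro w ⟨hwK, hwI⟩
  -- uniqueness
  obtain ⟨m, hm1, hm2⟩ := geo w v
  have hmK : m ∈ K := hKconv _ hwK _ hvK m hm1 hm2
  have h1 : I ^ p ≤ φ m ^ p := Real.rpow_le_rpow hI0 (hI_le m hmK) hp0.le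
  have h2 := hconv w v m hm1 hm2
  have hφw : φ w = I := hwI
  rw [hφw, hφvI] at h2
  have hd0 : (k/8) * dist w v ^ p ≤ 0 := by linarith
  by_contra hne
  have : dist w v ≠ 0 := fun h => hne (by rwa [dist_eq_zero] at h)
  have hdpos : 0 < dist w v := lt_of_le_of_ne dist_nonneg (Ne.symm this)
  have := Real.rpow_pos_of_pos hdpos p
  nlinarith
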